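/- For j ∈ ℕ₀, m ∈ {0,...,2^j−1}, and n ∈ ℕ₀, φ(n) lies in the dyadic interval I_{j,m} = [m/2^j, (m+1)/2^j) if and only if n = 2^j φ(m) + 2^j s for some s ∈ ℕ₀. -/

import Mathlib

open MeasureTheory Finset

/-- Base-2 radical inverse: for `n = ∑ nᵢ 2ⁱ`, `radInv n = ∑ nᵢ 2^{-i-1}`. -/
noncomputable def radInv (n : ℕ) : ℝ :=
  ∑ i ∈ Finset.range n, if n.testBit i then (1:ℝ)/2^(i+1) else 0

/-- L∞-normalized Haar function supported on `I_{j,m} = [m/2^j, (m+1)/2^j)`. -/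
noncomputable def haarFn (j m : ℕ) (t : ℝ) : ℝ :=
  if (m:ℝ)/2^j ≤ t ∧ t < (m:ℝ)/2^j + 1/2^(j+1) then 1
  else if (m:ℝ)/2^j + 1/2^(j+1) ≤ t ∧ t < ((m:ℝ)+1)/2^j then -1
  else 0

/-- Local discrepancy of the first `N` terms of the sequence `x`. -/
noncomputable def disc (x : ℕ → ℝ) (N : ℕ) (t : ℝ) : ℝ :=
  (∑ n ∈ Finset.range N, Set.indicator (Set.Ico (0:ℝ) t) (fun _ => (1:ℝ)) (x n)) / N - t

/-- Symmetrized van der Corput sequence: `z_{2m} = φ(m)`, `z_{2m+1} = 1 - φ(m)`. -/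
noncomputable def vdcSym (n : ℕ) : ℝ :=
  if n % 2 = 0 then radInv (n / 2) else 1 - radInv (n / 2)

/-- Haar coefficient `μ_{j,m}` of the local discrepancy of the first `N` terms of `x`. -/
noncomputable def haarCoeff (x : ℕ → ℝ) (N j m : ℕ) : ℝ :=
  ∫ t in (0:ℝ)..1, disc x N t * haarFn j m t

/-- Bit reversal of the lowest `j` bits of `k`. -/
def br (j k : ℕ) : ℕ := ∑ i ∈ Finset.range j, if k.testBit i then 2^(j-1-i) else 0

lemma br_succ_A (j k : ℕ) :
    br (j+1) k = 2 * br j k + (if k.testBit j then 1 else 0) := by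
  unfold br
  rw [Finset.sum_range_succ, Finset.mul_sum]
  congr 1
  · refine Finset.sum_congr rfl fun i hi => ?_
    rw [Finset.mem_range] at hi
    have h : j + 1 - 1 - i = (j - 1 - i) + 1 := by omega
    rw [h]
    split <;> ring
  · simp

lemma br_succ_B (j k : ℕ) :
    br (j+1) k = (if k.testBit 0 then 2^j else 0) + br j (k/2) := by
  unfold br
  rw [Finset.sum_range_succ']
  have h : (∑ i ∈ Finset.range j, if k.testBit (i+1) then 2^(j+1-1-(i+1)) else 0)
      = ∑ i ∈ Finset.range j, if (k/2).testBit i then 2^(j-1-i) else 0 := by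
    refine Finset.sum_congr rfl fun i hi => ?_
    have h1 : k.testBit (i+1) = (k/2).testBit i := (Nat.testBit_div_two k i).symm
    have h2 : j + 1 - 1 - (i+1) = j - 1 - i := by omega
    rw [h1, h2]
  rw [h]
  simp [add_comm]

lemma br_lt (j k : ℕ) : br j k < 2^j := by
  induction j generalizing k with
  | zero => simp [br]
  | succ j ih =>
    have := ih k
    rw [br_succ_A, pow_succ]
    split <;> omega

lemma br_br (j k : ℕ) : br j (br j k) = k % 2^j := by
  induction j generalizing k with
  | zero => simp [br, Nat.mod_one]
  | succ j ih =>
    have houter := br_succ_B j (br (j+1) k)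
    have hinner := br_succ_A j k
    have hb2 : k / 2^j % 2 = if k.testBit j then 1 else 0 := by
      rw [Nat.testBit_eq_decide_div_mod_eq]
      rcases Nat.mod_two_eq_zero_or_one (k / 2^j) with h | h <;> simp [h]
    cases hj : k.testBit j
    · simp only [hj, if_false, Bool.false_eq_true] at hinner hb2
      rw [Nat.mod_pow_succ, hb2, Nat.add_zero, Nat.mul_zero, Nat.add_zero,
        houter, hinner]
      have e1 : (2 * br j k + 0).testBit 0 = false := by
        rw [Nat.testBit_eq_decide_div_mod_eq, pow_zero, Nat.div_one]
        simp +decide [Nat.add_zero, Nat.mul_mod_right]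
      have e2 : (2 * br j k + 0) / 2 = br j k := by omega
      rw [e1, e2, ih]
      simp
    · simp only [hj, if_true] at hinner hb2
      rw [Nat.mod_pow_succ, hb2, Nat.mul_one, houter, hinner]
      have e1 : (2 * br j k + 1).testBit 0 = true := by
        rw [Nat.testBit_eq_decide_div_mod_eq, pow_zero, Nat.div_one]
        simp +decide [Nat.add_mul_mod_self_left, Nat.mul_add_mod]
      have e2 : (2 * br j k + 1) / 2 = br j k := by omega
      rw [e1, e2, ih]
      simp
      omega

lemma radInv_eq_sum (n K : ℕ) (h : n < 2^K) :
    radInv n = ∑ i ∈ Finset.range K, if n.testBit i then (1:ℝ)/2^(i+1) else 0 := by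
  have ext : ∀ M M' : ℕ, M ≤ M' → n < 2^M →
      (∑ i ∈ Finset.range M, if n.testBit i then (1:ℝ)/2^(i+1) else 0)
      = ∑ i ∈ Finset.range M', if n.testBit i then (1:ℝ)/2^(i+1) else 0 := by
    intro M M' hMM' hn
    refine Finset.sum_subset (Finset.range_subset_range.2 hMM') fun i hi hni => ?_
    rw [Finset.mem_range] at hi hni
    have : n < 2^i := lt_of_lt_of_le hn (Nat.pow_le_pow_right (by norm_num) (by omega))
    rw [Nat.testBit_lt_two_pow this]
    simp
  rw [radInv, ext n (n + K) (by omega) (Nat.lt_two_pow_self (n := n)), ← ext K (n + K) (by omega) h]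

lemma radInv_nonneg (n : ℕ) : 0 ≤ radInv n := by
  refine Finset.sum_nonneg fun i _ => ?_
  split <;> positivity

lemma sum_half (n : ℕ) : ∑ i ∈ Finset.range n, (1:ℝ)/2^(i+1) = 1 - 1/2^n := by
  induction n with
  | zero => simp
  | succ n ih =>
    rw [Finset.sum_range_succ, ih]
    have h : (2:ℝ)^(n+1) = 2^n * 2 := pow_succ 2 n
    have h0 : (2:ℝ)^n ≠ 0 := by positivity
    field_simp [h]
    ring

lemma radInv_lt_one (n : ℕ) : radInv n < 1 := by
  have h1 : radInv n ≤ ∑ i ∈ Finset.range n, (1:ℝ)/2^(i+1) := by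
    refine Finset.sum_le_sum fun i _ => ?_
    split
    · exact le_refl _
    · positivity
  have h2 : (0:ℝ) < 1/2^n := by positivity
  rw [sum_half] at h1
  linarith

lemma radInv_split (j n : ℕ) :
    2^j * radInv n = (br j (n % 2^j) : ℝ) + radInv (n / 2^j) := by
  have hn : n < 2^(j + n) :=
    lt_of_lt_of_le (Nat.lt_two_pow_self (n := n)) (Nat.pow_le_pow_right (by norm_num) (by omega))
  rw [radInv_eq_sum n (j + n) hn,
    ← Finset.sum_range_add_sum_Ico (fun i => if n.testBit i then (1:ℝ)/2^(i+1) else 0)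
      (show j ≤ j + n by omega),
    Finset.sum_Ico_eq_sum_range]
  simp only [Nat.add_sub_cancel_left]
  rw [mul_add]
  congr 1
  · rw [br, Nat.cast_sum, Finset.mul_sum]
    refine Finset.sum_congr rfl fun i hi => ?_
    rw [Finset.mem_range] at hi
    have hb : (n % 2^j).testBit i = n.testBit i := by
      rw [Nat.testBit_mod_two_pow]
      simp [hi]
    rw [hb]
    by_cases h : n.testBit i <;> simp only [h, if_true, if_false]
    · push_cast
      rw [show j = (j - 1 - i) + (i + 1) by omega, pow_add]
      field_simp
      congr 1
      omega
    · simp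
  · have hdiv : n / 2^j < 2^n := lt_of_le_of_lt (Nat.div_le_self n _) (Nat.lt_two_pow_self (n := n))
    rw [radInv_eq_sum (n / 2^j) n hdiv, Finset.mul_sum]
    refine Finset.sum_congr rfl fun i hi => ?_
    rw [← Nat.shiftRight_eq_div_pow, Nat.testBit_shiftRight]
    split
    · rw [show j + i + 1 = j + (i + 1) by omega, pow_add]
      field_simp
    · simp

lemma radInv_of_lt (j m : ℕ) (hm : m < 2^j) : 2^j * radInv m = (br j m : ℝ) := by
  have h := radInv_split j m
  rw [Nat.mod_eq_of_lt hm, Nat.div_eq_of_lt hm,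
    show radInv 0 = 0 by simp [radInv], add_zero] at h
  exact h

theorem radInv_mem_dyadic_iff (j m n : ℕ) (hm : m < 2^j) :
    radInv n ∈ Set.Ico ((m:ℝ)/2^j) (((m:ℝ)+1)/2^j) ↔
      ∃ s : ℕ, (n:ℝ) = 2^j * radInv m + 2^j * s := by
  have h2j : (0:ℝ) < 2^j := by positivity
  set B := br j (n % 2^j) with hB
  set r := radInv (n / 2^j) with hr
  have hsplit : 2^j * radInv n = (B:ℝ) + r := radInv_split j n
  have hr0 : 0 ≤ r := radInv_nonneg _
  have hr1 : r < 1 := radInv_lt_one _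
  have lhs_iff : radInv n ∈ Set.Ico ((m:ℝ)/2^j) (((m:ℝ)+1)/2^j) ↔ B = m := by
    rw [Set.mem_Ico, div_le_iff₀' h2j, lt_div_iff₀' h2j, hsplit]
    constructor
    · rintro ⟨h1, h2⟩
      have hmB : (m:ℝ) < B + 1 := by linarith
      have hBm : (B:ℝ) < m + 1 := by linarith
      have : m < B + 1 := by exact_mod_cast hmB
      have : B < m + 1 := by exact_mod_cast hBm
      omega
    · rintro rfl
      constructor <;> linarith
  rw [lhs_iff, radInv_of_lt j m hm]
  have hmod : n % 2^j < 2^j := Nat.mod_lt _ (by positivity)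
  constructor
  · intro hBm
    refine ⟨n / 2^j, ?_⟩
    have heq : n % 2^j = br j m := by
      rw [← hBm, hB, br_br, Nat.mod_eq_of_lt hmod]
    have hn : n = br j m + 2^j * (n / 2^j) := by
      rw [← heq, Nat.mod_add_div]
    exact_mod_cast hn
  · rintro ⟨s, hs⟩
    have hn : n = br j m + 2^j * s := by exact_mod_cast hs
    rw [hB, hn, Nat.add_mul_mod_self_left, Nat.mod_eq_of_lt (br_lt j m), br_br,
      Nat.mod_eq_of_lt hm]
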